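/- (Non-robustness of the feature-averaging network) Let d, k ≥ 1 with d ≥ 2 and 2k · ln d < √d, let μ : Fin k → ℝ^d be orthogonal equinorm cluster features with binary cluster labels s, and suppose for some real c ≥ 1 that |J₊| ≥ k/(1+c) and |J₋| ≥ k/(1+c). Set δ := 2(1+c) · √(d/k). Then the δ-robust accuracy of f_FA is nearly zero: the probability over (J, ξ) ~ (uniform on Fin k) ⊗ γ_d that sgn(f_FA(μ_J + ξ + ρ)) = s J holds for ALL perturbations ρ ∈ ℝ^d with ‖ρ‖ ≤ δ is at most 2k · d^{−(ln d)/2}. (The successful attack is ρ = ∓(2(1+c)/k)(Σ_{j∈J₊} μ_j − Σ_{j∈J₋} μ_j), whose norm is 2(1+c)√(d/k).) -/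

import Mathlib

open MeasureTheory ProbabilityTheory Real Finset
open scoped RealInnerProductSpace

open scoped ENNReal

/-- The standard Gaussian measure on `ℝ^d`. -/
noncomputable def stdGaussian (d : ℕ) : Measure (EuclideanSpace ℝ (Fin d)) :=
  (Measure.pi fun _ : Fin d => gaussianReal 0 1).map (MeasurableEquiv.toLp 2 (Fin d → ℝ))

/-- The sign function: `1` on positive reals, `-1` otherwise. -/
noncomputable def sgn (z : ℝ) : ℝ := if 0 < z then 1 else -1

/-- The ReLU activation. -/
noncomputable def relu (z : ℝ) : ℝ := max z 0

/-- The feature-averaging network. -/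
noncomputable def fFA {d k : ℕ} (μ : Fin k → EuclideanSpace ℝ (Fin d)) (s : Fin k → ℝ)
    (x : EuclideanSpace ℝ (Fin d)) : ℝ :=
  relu ⟪∑ j ∈ univ.filter (fun j => s j = 1), μ j, x⟫ -
    relu ⟪∑ j ∈ univ.filter (fun j => s j = -1), μ j, x⟫

lemma lintegral_pi_prod_gaussian :
    ∀ (n : ℕ) (f : Fin n → ℝ → ℝ≥0∞), (∀ i, Measurable (f i)) →
    ∫⁻ x : Fin n → ℝ, ∏ i, f i (x i) ∂(Measure.pi fun _ => gaussianReal 0 1)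
      = ∏ i, ∫⁻ x, f i x ∂(gaussianReal 0 1) := by
  intro n
  induction n with
  | zero =>
      intro f _
      simp
  | succ n ih =>
      intro f hf
      have hmp := measurePreserving_piFinSuccAbove
        (fun _ : Fin (n + 1) => gaussianReal 0 1) 0
      have hFmeas : Measurable (fun y : ℝ × (Fin n → ℝ) =>
          f 0 y.1 * ∏ i : Fin n, f i.succ (y.2 i)) := by
        refine Measurable.mul ((hf 0).comp measurable_fst) ?_
        exact Finset.measurable_prod _ fun i _ =>
          (hf i.succ).comp ((measurable_pi_apply i).comp measurable_snd)
      have key := hmp.lintegral_comp hFmeas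
      calc (∫⁻ x : Fin (n+1) → ℝ, ∏ i, f i (x i)
            ∂(Measure.pi fun _ => gaussianReal 0 1))
          = ∫⁻ x : Fin (n+1) → ℝ,
              f 0 ((MeasurableEquiv.piFinSuccAbove (fun _ => ℝ) 0 x).1) *
              ∏ i : Fin n, f i.succ ((MeasurableEquiv.piFinSuccAbove (fun _ => ℝ) 0 x).2 i)
            ∂(Measure.pi fun _ => gaussianReal 0 1) := by
            refine lintegral_congr fun x => ?_
            rw [Fin.prod_univ_succ]
            simp [MeasurableEquiv.piFinSuccAbove, Fin.zero_succAbove, Fin.tail]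
        _ = ∫⁻ b : ℝ × (Fin n → ℝ), f 0 b.1 * ∏ i : Fin n, f i.succ (b.2 i)
            ∂((gaussianReal 0 1).prod (Measure.pi fun _ => gaussianReal 0 1)) := key
        _ = (∫⁻ x, f 0 x ∂(gaussianReal 0 1)) *
            ∫⁻ z : Fin n → ℝ, ∏ i : Fin n, f i.succ (z i)
              ∂(Measure.pi fun _ => gaussianReal 0 1) :=
            lintegral_prod_mul ((hf 0).aemeasurable)
              ((Finset.measurable_prod _ fun (i : Fin n) _ =>
                (hf i.succ).comp (measurable_pi_apply i)).aemeasurable)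
        _ = (∫⁻ x, f 0 x ∂(gaussianReal 0 1)) *
            ∏ i : Fin n, ∫⁻ x, f i.succ x ∂(gaussianReal 0 1) := by
            rw [ih (fun i : Fin n => f i.succ) (fun i => hf i.succ)]
        _ = ∏ i, ∫⁻ x, f i x ∂(gaussianReal 0 1) := by
            rw [Fin.prod_univ_succ]

lemma lintegral_exp_gaussianReal (a : ℝ) :
    ∫⁻ x, ENNReal.ofReal (Real.exp (a * x)) ∂(gaussianReal 0 1)
      = ENNReal.ofReal (Real.exp (a ^ 2 / 2)) := by
  rw [gaussianReal_of_var_ne_zero 0 one_ne_zero,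
    lintegral_withDensity_eq_lintegral_mul _ (measurable_gaussianPDF 0 1)
      (show Measurable fun x : ℝ => ENNReal.ofReal (rexp (a * x)) by fun_prop)]
  have hpt : ∀ x : ℝ, (gaussianPDF 0 1 * fun x => ENNReal.ofReal (rexp (a * x))) x
      = ENNReal.ofReal (rexp (a ^ 2 / 2)) * ENNReal.ofReal (gaussianPDFReal a 1 x) := by
    intro x
    simp only [Pi.mul_apply, gaussianPDF]
    rw [← ENNReal.ofReal_mul (gaussianPDFReal_nonneg _ _ _),
      ← ENNReal.ofReal_mul (le_of_lt (Real.exp_pos _))]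
    congr 1
    simp only [gaussianPDFReal, NNReal.coe_one, mul_one]
    rw [mul_assoc, ← Real.exp_add,
      show -(x - 0) ^ 2 / 2 + a * x = a ^ 2 / 2 + -(x - a) ^ 2 / 2 by ring,
      Real.exp_add]
    ring
  rw [lintegral_congr hpt, lintegral_const_mul _ (measurable_gaussianPDFReal a 1).ennreal_ofReal]
  have : ∫⁻ x, ENNReal.ofReal (gaussianPDFReal a 1 x) = 1 :=
    lintegral_gaussianPDFReal_eq_one a one_ne_zero
  rw [this, mul_one]

lemma stdGaussian_tail (d : ℕ) (v : EuclideanSpace ℝ (Fin d)) (hv : v ≠ 0)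
    {t : ℝ} (ht : 0 < t) :
    stdGaussian d {ξ | t ≤ ⟪v, ξ⟫} ≤ ENNReal.ofReal (rexp (-(t ^ 2) / (2 * ‖v‖ ^ 2))) := by
  have hv' : (0:ℝ) < ‖v‖ := norm_pos_iff.mpr hv
  have hnv : (0:ℝ) < ‖v‖ ^ 2 := by positivity
  set l : ℝ := t / ‖v‖ ^ 2 with hl
  have hl0 : 0 < l := div_pos ht hnv
  have hinner : ∀ ξ : EuclideanSpace ℝ (Fin d), ⟪v, ξ⟫ = ∑ i, v i * ξ i := by
    intro ξ
    simp [PiLp.inner_apply, RCLike.inner_apply, mul_comm]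
  set f : EuclideanSpace ℝ (Fin d) → ℝ≥0∞ :=
    fun ξ => ENNReal.ofReal (rexp (l * ∑ i, v i * ξ i)) with hfdef
  have hfm : Measurable f := by
    apply Measurable.ennreal_ofReal
    apply Measurable.exp
    exact (Finset.measurable_sum _ fun i _ =>
      (by fun_prop : Measurable fun x : EuclideanSpace ℝ (Fin d) => v i * x i)).const_mul l
  have hfl : ∫⁻ ξ, f ξ ∂(stdGaussian d)
      = ENNReal.ofReal (rexp (l ^ 2 * ‖v‖ ^ 2 / 2)) := by
    have hfeq : ∀ ξ : EuclideanSpace ℝ (Fin d),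
        f ξ = ∏ i, ENNReal.ofReal (rexp (l * v i * ξ i)) := by
      intro ξ
      rw [hfdef]
      simp only
      rw [Finset.mul_sum, Real.exp_sum,
        ← ENNReal.ofReal_prod_of_nonneg (fun i _ => (Real.exp_pos _).le)]
      congr 1
      exact Finset.prod_congr rfl fun i _ => by rw [mul_assoc]
    calc ∫⁻ ξ, f ξ ∂(stdGaussian d)
        = ∫⁻ ξ : Fin d → ℝ, ∏ i, ENNReal.ofReal (rexp (l * v i * ξ i))
            ∂(Measure.pi fun _ => gaussianReal 0 1) := by
          rw [_root_.stdGaussian, lintegral_map_equiv]; exact lintegral_congr fun ξ => hfeq _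
      _ = ∏ i, ∫⁻ x : ℝ, ENNReal.ofReal (rexp (l * v i * x)) ∂(gaussianReal 0 1) := by
          exact lintegral_pi_prod_gaussian d _ fun i =>
            (measurable_exp.comp (measurable_id.const_mul _)).ennreal_ofReal
      _ = ∏ i, ENNReal.ofReal (rexp ((l * v i) ^ 2 / 2)) := by
          exact Finset.prod_congr rfl fun i _ => lintegral_exp_gaussianReal (l * v i)
      _ = ENNReal.ofReal (rexp (l ^ 2 * ‖v‖ ^ 2 / 2)) := by
          rw [← ENNReal.ofReal_prod_of_nonneg (fun i _ => le_of_lt (Real.exp_pos _)),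
            ← Real.exp_sum]
          congr 2
          have hnorm : ‖v‖ ^ 2 = ∑ i, v i * v i := by
            rw [← real_inner_self_eq_norm_sq, hinner]
          rw [hnorm, Finset.mul_sum, Finset.sum_div]
          exact Finset.sum_congr rfl fun i _ => by ring
  have hsub : {ξ : EuclideanSpace ℝ (Fin d) | t ≤ ⟪v, ξ⟫}
      ⊆ {ξ | ENNReal.ofReal (rexp (l * t)) ≤ f ξ} := by
    intro ξ hξ
    simp only [Set.mem_setOf_eq] at hξ ⊢
    rw [hfdef]
    simp only
    apply ENNReal.ofReal_le_ofReal
    apply Real.exp_le_exp.mpr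
    rw [← hinner]
    exact mul_le_mul_of_nonneg_left hξ (le_of_lt hl0)
  have hmark := mul_meas_ge_le_lintegral₀ hfm.aemeasurable
    (μ := stdGaussian d) (ε := ENNReal.ofReal (rexp (l * t)))
  have hle : ENNReal.ofReal (rexp (l * t)) * stdGaussian d {ξ | t ≤ ⟪v, ξ⟫}
      ≤ ENNReal.ofReal (rexp (l ^ 2 * ‖v‖ ^ 2 / 2)) := by
    calc ENNReal.ofReal (rexp (l * t)) * stdGaussian d {ξ | t ≤ ⟪v, ξ⟫}
        ≤ ENNReal.ofReal (rexp (l * t)) *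
            stdGaussian d {ξ | ENNReal.ofReal (rexp (l * t)) ≤ f ξ} := by
          exact mul_le_mul_right (measure_mono hsub) _
      _ ≤ ∫⁻ ξ, f ξ ∂(stdGaussian d) := hmark
      _ = _ := hfl
  have hε0 : ENNReal.ofReal (rexp (l * t)) ≠ 0 := by
    simp [ENNReal.ofReal_eq_zero, not_le, Real.exp_pos]
  have hεtop : ENNReal.ofReal (rexp (l * t)) ≠ ⊤ := ENNReal.ofReal_ne_top
  have hle' : stdGaussian d {ξ | t ≤ ⟪v, ξ⟫} * ENNReal.ofReal (rexp (l * t))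
      ≤ ENNReal.ofReal (rexp (l ^ 2 * ‖v‖ ^ 2 / 2)) := by
    rw [mul_comm]; exact hle
  have := (ENNReal.le_div_iff_mul_le (Or.inl hε0) (Or.inl hεtop)).mpr hle'
  refine this.trans ?_
  rw [ENNReal.le_ofReal_iff_toReal_le]
  · rw [ENNReal.toReal_div, ENNReal.toReal_ofReal (le_of_lt (Real.exp_pos _)),
      ENNReal.toReal_ofReal (le_of_lt (Real.exp_pos _)), ← Real.exp_sub]
    apply Real.exp_le_exp.mpr
    have : l ^ 2 * ‖v‖ ^ 2 / 2 - l * t = -(t ^ 2) / (2 * ‖v‖ ^ 2) := by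
      rw [hl]; field_simp; ring
    rw [this]
  · exact (ENNReal.div_lt_top ENNReal.ofReal_ne_top hε0).ne
  · exact le_of_lt (Real.exp_pos _)

set_option maxHeartbeats 1000000 in
theorem featureAveraging_nonrobust (d k : ℕ) (hd : 2 ≤ d) (hk : 1 ≤ k)
    (hlog : 2 * k * Real.log d < Real.sqrt d)
    (μ : Fin k → EuclideanSpace ℝ (Fin d))
    (hnorm : ∀ j, ‖μ j‖ = Real.sqrt d)
    (horth : ∀ i j, i ≠ j → ⟪μ i, μ j⟫ = 0)
    (s : Fin k → ℝ) (hs : ∀ j, s j = 1 ∨ s j = -1)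
    (c : ℝ) (hc : 1 ≤ c)
    (hpos : (k : ℝ) / (1 + c) ≤ (univ.filter (fun j => s j = 1)).card)
    (hneg : (k : ℝ) / (1 + c) ≤ (univ.filter (fun j => s j = -1)).card) :
    (((k : ENNReal)⁻¹ • (Measure.count : Measure (Fin k))).prod (stdGaussian d))
        {p : Fin k × EuclideanSpace ℝ (Fin d) |
          ∀ ρ : EuclideanSpace ℝ (Fin d), ‖ρ‖ ≤ 2 * (1 + c) * Real.sqrt (d / k) →
            sgn (fFA μ s (μ p.1 + p.2 + ρ)) = s p.1} ≤
      ENNReal.ofReal (2 * k * (d : ℝ) ^ (-(Real.log d) / 2)) := by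
  classical
  have hd0 : (0:ℝ) < d := by
    have : (2:ℝ) ≤ d := by exact_mod_cast hd
    linarith
  have hd1 : (1:ℝ) < d := by
    have : (2:ℝ) ≤ d := by exact_mod_cast hd
    linarith
  have hk0 : (0:ℝ) < k := by
    have : (1:ℝ) ≤ k := by exact_mod_cast hk
    linarith
  have hcpos : (0:ℝ) < 1 + c := by linarith
  obtain ⟨P, hPdef⟩ : ∃ P : Finset (Fin k), P = univ.filter (fun j => s j = 1) := ⟨_, rfl⟩
  obtain ⟨N, hNdef⟩ : ∃ N : Finset (Fin k), N = univ.filter (fun j => s j = -1) := ⟨_, rfl⟩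
  obtain ⟨v₁, hv1def⟩ : ∃ v : EuclideanSpace ℝ (Fin d), v = ∑ j ∈ P, μ j := ⟨_, rfl⟩
  obtain ⟨v₂, hv2def⟩ : ∃ v : EuclideanSpace ℝ (Fin d), v = ∑ j ∈ N, μ j := ⟨_, rfl⟩
  rw [← hPdef] at hpos
  rw [← hNdef] at hneg
  have hPpos : 0 < P.card := by
    have h1 : (0:ℝ) < P.card := lt_of_lt_of_le (div_pos hk0 hcpos) hpos
    exact_mod_cast h1
  have hNpos : 0 < N.card := by
    have h1 : (0:ℝ) < N.card := lt_of_lt_of_le (div_pos hk0 hcpos) hneg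
    exact_mod_cast h1
  have hPN : Disjoint P N := by
    rw [Finset.disjoint_left]
    intro j hjP hjN
    rw [hPdef, Finset.mem_filter] at hjP
    rw [hNdef, Finset.mem_filter] at hjN
    have := hjP.2
    have := hjN.2
    norm_num [hjP.2] at hjN
  have hcards : P.card + N.card ≤ k := by
    have h1 := Finset.card_union_of_disjoint hPN
    have h2 := Finset.card_le_univ (P ∪ N)
    simp only [Finset.card_univ, Fintype.card_fin] at h2
    omega
  have hk2 : 2 ≤ k := by omega
  -- inner product facts
  have hμμ : ∀ i j, ⟪μ i, μ j⟫ = if i = j then (d:ℝ) else 0 := by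
    intro i j
    by_cases h : i = j
    · subst h
      rw [if_pos rfl, real_inner_self_eq_norm_sq, hnorm, Real.sq_sqrt hd0.le]
    · rw [if_neg h]
      exact horth i j h
  have hsumμ : ∀ (A : Finset (Fin k)) (j : Fin k),
      ⟪∑ i ∈ A, μ i, μ j⟫ = if j ∈ A then (d:ℝ) else 0 := by
    intro A j
    rw [sum_inner, Finset.sum_congr rfl (fun i _ => hμμ i j), Finset.sum_ite_eq' A j
      (fun _ => (d:ℝ))]
  have hVV : ∀ A B : Finset (Fin k),
      ⟪∑ i ∈ A, μ i, ∑ j ∈ B, μ j⟫ = ((A ∩ B).card : ℝ) * d := by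
    intro A B
    rw [inner_sum, Finset.sum_congr rfl (fun j _ => hsumμ A j), Finset.sum_ite_mem,
      Finset.sum_const, nsmul_eq_mul, Finset.inter_comm]
  have hV11 : ⟪v₁, v₁⟫ = (P.card : ℝ) * d := by
    rw [hv1def, hVV, Finset.inter_self]
  have hV22 : ⟪v₂, v₂⟫ = (N.card : ℝ) * d := by
    rw [hv2def, hVV, Finset.inter_self]
  have hV12 : ⟪v₁, v₂⟫ = 0 := by
    rw [hv1def, hv2def, hVV, Finset.disjoint_iff_inter_eq_empty.mp hPN]
    simp
  have hV21 : ⟪v₂, v₁⟫ = 0 := by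
    rw [real_inner_comm]
    exact hV12
  have hfFA : ∀ x : EuclideanSpace ℝ (Fin d),
      fFA μ s x = relu ⟪v₁, x⟫ - relu ⟪v₂, x⟫ := by
    intro x
    simp only [fFA]
    rw [← hPdef, ← hNdef, ← hv1def, ← hv2def]
  -- the adversarial perturbation
  obtain ⟨ρ₀, hρdef⟩ : ∃ r : EuclideanSpace ℝ (Fin d),
      r = ((2 * (1 + c)) / k) • (v₁ - v₂) := ⟨_, rfl⟩
  have hsubnorm : ‖v₁ - v₂‖ ^ 2 = (P.card : ℝ) * d + (N.card : ℝ) * d := by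
    rw [← real_inner_self_eq_norm_sq, inner_sub_left, inner_sub_right, inner_sub_right,
      hV11, hV12, hV21, hV22]
    ring
  have hρnorm : ‖ρ₀‖ ≤ 2 * (1 + c) * Real.sqrt ((d:ℝ) / k) := by
    rw [hρdef, norm_smul, Real.norm_eq_abs, abs_of_nonneg (by positivity)]
    have h1 : ‖v₁ - v₂‖ ≤ Real.sqrt ((k:ℝ) * d) := by
      rw [← Real.sqrt_sq (norm_nonneg (v₁ - v₂))]
      apply Real.sqrt_le_sqrt
      rw [hsubnorm]
      have : (P.card : ℝ) + (N.card : ℝ) ≤ k := by exact_mod_cast hcards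
      nlinarith
    have h2 : Real.sqrt ((d:ℝ) / k) = Real.sqrt ((k:ℝ) * d) / k := by
      rw [show (d:ℝ) / k = ((k:ℝ) * d) / k ^ 2 by field_simp,
        Real.sqrt_div (by positivity), Real.sqrt_sq hk0.le]
    rw [h2]
    calc 2 * (1 + c) / k * ‖v₁ - v₂‖ ≤ 2 * (1 + c) / k * Real.sqrt ((k:ℝ) * d) := by
          apply mul_le_mul_of_nonneg_left h1 (by positivity)
      _ = 2 * (1 + c) * (Real.sqrt ((k:ℝ) * d) / k) := by ring
  have hιρ : ∀ w : EuclideanSpace ℝ (Fin d),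
      ⟪w, ρ₀⟫ = 2 * (1 + c) / k * (⟪w, v₁⟫ - ⟪w, v₂⟫) := by
    intro w
    rw [hρdef, inner_smul_right, inner_sub_right]
  have h2dP : 2 * (d:ℝ) ≤ 2 * (1 + c) / k * ((P.card:ℝ) * d) := by
    have hkc : (k:ℝ) ≤ (P.card:ℝ) * (1 + c) := (div_le_iff₀ hcpos).mp hpos
    rw [div_mul_eq_mul_div, le_div_iff₀ hk0]
    nlinarith
  have h2dN : 2 * (d:ℝ) ≤ 2 * (1 + c) / k * ((N.card:ℝ) * d) := by
    have hkc : (k:ℝ) ≤ (N.card:ℝ) * (1 + c) := (div_le_iff₀ hcpos).mp hneg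
    rw [div_mul_eq_mul_div, le_div_iff₀ hk0]
    nlinarith
  -- the bad events
  set E₁ : Set (EuclideanSpace ℝ (Fin d)) := {ξ | (d:ℝ) ≤ ⟪v₁, ξ⟫} with hE1def
  set E₂ : Set (EuclideanSpace ℝ (Fin d)) := {ξ | (d:ℝ) ≤ ⟪-v₁, ξ⟫} with hE2def
  set E₃ : Set (EuclideanSpace ℝ (Fin d)) := {ξ | (d:ℝ) ≤ ⟪v₂, ξ⟫} with hE3def
  -- the subset step
  have hsubset : {p : Fin k × EuclideanSpace ℝ (Fin d) |
        ∀ ρ : EuclideanSpace ℝ (Fin d), ‖ρ‖ ≤ 2 * (1 + c) * Real.sqrt (d / k) →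
          sgn (fFA μ s (μ p.1 + p.2 + ρ)) = s p.1}
      ⊆ {p : Fin k × EuclideanSpace ℝ (Fin d) | p.2 ∈ E₁ ∪ E₂ ∪ E₃} := by
    rintro ⟨J, ξ⟩ h
    simp only [Set.mem_setOf_eq] at h ⊢
    rcases hs J with hJ | hJ
    · -- positive cluster : attack with -ρ₀
      have hJP : J ∈ P := by
        rw [hPdef, Finset.mem_filter]
        exact ⟨Finset.mem_univ _, hJ⟩
      have h1 := h (-ρ₀) (by rwa [norm_neg])
      rw [hJ] at h1
      have hposf : 0 < fFA μ s (μ J + ξ + -ρ₀) := by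
        by_contra hle
        rw [sgn, if_neg hle] at h1
        norm_num at h1
      have hposf' : 0 < relu ⟪v₁, μ J + ξ + -ρ₀⟫ - relu ⟪v₂, μ J + ξ + -ρ₀⟫ := by
        rw [← hfFA]
        exact hposf
      have hrelu2 : 0 ≤ relu ⟪v₂, μ J + ξ + -ρ₀⟫ := le_max_right _ 0
      have hA : 0 < ⟪v₁, μ J + ξ + -ρ₀⟫ := by
        by_contra hle
        push_neg at hle
        rw [relu, max_eq_right hle] at hposf'
        linarith
      have hx : ⟪v₁, μ J + ξ + -ρ₀⟫
          = (d:ℝ) + ⟪v₁, ξ⟫ - 2 * (1 + c) / k * ((P.card:ℝ) * d) := by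
        rw [inner_add_right, inner_add_right, inner_neg_right, hιρ, hV11, hV12, hv1def,
          hsumμ, if_pos hJP]
        ring
      left; left
      show (d:ℝ) ≤ ⟪v₁, ξ⟫
      rw [hx] at hA
      linarith
    · -- negative cluster : attack with ρ₀
      have hJP : J ∉ P := by
        rw [hPdef, Finset.mem_filter]
        rintro ⟨-, h'⟩
        rw [hJ] at h'
        norm_num at h'
      have hJN : J ∈ N := by
        rw [hNdef, Finset.mem_filter]
        exact ⟨Finset.mem_univ _, hJ⟩
      have h1 := h ρ₀ hρnorm
      rw [hJ] at h1
      have hnotpos : ¬ 0 < fFA μ s (μ J + ξ + ρ₀) := by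
        intro hp
        rw [sgn, if_pos hp] at h1
        norm_num at h1
      have hrelu : relu ⟪v₁, μ J + ξ + ρ₀⟫ - relu ⟪v₂, μ J + ξ + ρ₀⟫ ≤ 0 := by
        rw [← hfFA]
        exact not_lt.mp hnotpos
      have hx1 : ⟪v₁, μ J + ξ + ρ₀⟫
          = ⟪v₁, ξ⟫ + 2 * (1 + c) / k * ((P.card:ℝ) * d) := by
        rw [inner_add_right, inner_add_right, hιρ, hV11, hV12, hv1def, hsumμ,
          if_neg hJP]
        ring
      have hx2 : ⟪v₂, μ J + ξ + ρ₀⟫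
          = (d:ℝ) + ⟪v₂, ξ⟫ - 2 * (1 + c) / k * ((N.card:ℝ) * d) := by
        rw [inner_add_right, inner_add_right, hιρ, hV21, hV22, hv2def, hsumμ,
          if_pos hJN]
        ring
      by_cases hb1 : (d:ℝ) ≤ ⟪-v₁, ξ⟫
      · exact Or.inl (Or.inr hb1)
      by_cases hb2 : (d:ℝ) ≤ ⟪v₂, ξ⟫
      · exact Or.inr hb2
      exfalso
      push_neg at hb1 hb2
      rw [inner_neg_left] at hb1
      have hA : (d:ℝ) < ⟪v₁, μ J + ξ + ρ₀⟫ := by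
        rw [hx1]
        linarith
      have hreluA : relu ⟪v₁, μ J + ξ + ρ₀⟫ = ⟪v₁, μ J + ξ + ρ₀⟫ :=
        max_eq_left (by linarith)
      have hreluB : (d:ℝ) < relu ⟪v₂, μ J + ξ + ρ₀⟫ := by
        rw [hreluA] at hrelu
        linarith
      have hreluB' : (d:ℝ) < max ⟪v₂, μ J + ξ + ρ₀⟫ 0 := hreluB
      have hB : (d:ℝ) < ⟪v₂, μ J + ξ + ρ₀⟫ := by
        rcases lt_max_iff.mp hreluB' with h' | h'
        · exact h'
        · linarith
      rw [hx2] at hB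
      linarith
  -- measure computations
  haveI : IsProbabilityMeasure (stdGaussian d) := by
    constructor
    rw [_root_.stdGaussian, Measure.map_apply (MeasurableEquiv.measurable _) MeasurableSet.univ,
      Set.preimage_univ]
    exact (Measure.pi.instIsProbabilityMeasure
      (μ := fun _ : Fin d => gaussianReal 0 1)).measure_univ
  have hmeas : ∀ w : EuclideanSpace ℝ (Fin d),
      MeasurableSet {ξ : EuclideanSpace ℝ (Fin d) | (d:ℝ) ≤ ⟪w, ξ⟫} := by
    intro w
    have hcont : Continuous fun ξ : EuclideanSpace ℝ (Fin d) => ⟪w, ξ⟫ :=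
      continuous_const.inner continuous_id
    exact measurableSet_le measurable_const hcont.measurable
  have htail : ∀ (w : EuclideanSpace ℝ (Fin d)) (m : ℕ), 1 ≤ m → m ≤ k →
      ‖w‖ ^ 2 = (m:ℝ) * d →
      stdGaussian d {ξ | (d:ℝ) ≤ ⟪w, ξ⟫} ≤ ENNReal.ofReal (rexp (-(d:ℝ) / (2 * k))) := by
    intro w m hm1 hmk hw
    have hm0 : (0:ℝ) < m := by exact_mod_cast hm1
    have hw0 : w ≠ 0 := by
      intro h0
      rw [h0, norm_zero] at hw
      nlinarith
    refine (stdGaussian_tail d w hw0 hd0).trans ?_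
    apply ENNReal.ofReal_le_ofReal
    apply Real.exp_le_exp.mpr
    rw [hw, show -((d:ℝ) ^ 2) / (2 * ((m:ℝ) * d)) = -(d:ℝ) / (2 * m) by
      field_simp]
    rw [neg_div, neg_div, neg_le_neg_iff]
    apply div_le_div_of_nonneg_left hd0.le (by positivity)
    have : (m:ℝ) ≤ k := by exact_mod_cast hmk
    linarith
  have hb1 : stdGaussian d E₁ ≤ ENNReal.ofReal (rexp (-(d:ℝ) / (2 * k))) := by
    apply htail v₁ P.card hPpos (le_of_add_le_left hcards)
    rw [← real_inner_self_eq_norm_sq, hV11]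
  have hb2 : stdGaussian d E₂ ≤ ENNReal.ofReal (rexp (-(d:ℝ) / (2 * k))) := by
    apply htail (-v₁) P.card hPpos (le_of_add_le_left hcards)
    rw [norm_neg, ← real_inner_self_eq_norm_sq, hV11]
  have hb3 : stdGaussian d E₃ ≤ ENNReal.ofReal (rexp (-(d:ℝ) / (2 * k))) := by
    apply htail v₂ N.card hNpos (by omega)
    rw [← real_inner_self_eq_norm_sq, hV22]
  -- glue everything
  have hprod : {p : Fin k × EuclideanSpace ℝ (Fin d) | p.2 ∈ E₁ ∪ E₂ ∪ E₃}
      = Set.univ ×ˢ (E₁ ∪ E₂ ∪ E₃) := by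
    ext p
    simp
  have hcount : ((k : ENNReal)⁻¹ • (Measure.count : Measure (Fin k))) Set.univ = 1 := by
    rw [Measure.smul_apply, Measure.count_univ, ENat.card_eq_coe_fintype_card, ENat.toENNReal_coe, Fintype.card_fin, smul_eq_mul]
    rw [ENNReal.inv_mul_cancel]
    · exact Nat.cast_ne_zero.mpr (by omega)
    · exact ENNReal.natCast_ne_top k
  calc (((k : ENNReal)⁻¹ • (Measure.count : Measure (Fin k))).prod (stdGaussian d))
        {p : Fin k × EuclideanSpace ℝ (Fin d) |
          ∀ ρ : EuclideanSpace ℝ (Fin d), ‖ρ‖ ≤ 2 * (1 + c) * Real.sqrt (d / k) →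
            sgn (fFA μ s (μ p.1 + p.2 + ρ)) = s p.1}
      ≤ (((k : ENNReal)⁻¹ • (Measure.count : Measure (Fin k))).prod (stdGaussian d))
          {p : Fin k × EuclideanSpace ℝ (Fin d) | p.2 ∈ E₁ ∪ E₂ ∪ E₃} :=
        measure_mono hsubset
    _ = ((k : ENNReal)⁻¹ • (Measure.count : Measure (Fin k))) Set.univ *
          stdGaussian d (E₁ ∪ E₂ ∪ E₃) := by
        rw [hprod, Measure.prod_prod]
    _ = stdGaussian d (E₁ ∪ E₂ ∪ E₃) := by rw [hcount, one_mul]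
    _ ≤ stdGaussian d E₁ + stdGaussian d E₂ + stdGaussian d E₃ :=
        le_trans (measure_union_le _ _) (add_le_add_left (measure_union_le _ _) _)
    _ ≤ ENNReal.ofReal (rexp (-(d:ℝ) / (2 * k))) + ENNReal.ofReal (rexp (-(d:ℝ) / (2 * k)))
          + ENNReal.ofReal (rexp (-(d:ℝ) / (2 * k))) :=
        add_le_add (add_le_add hb1 hb2) hb3
    _ = ENNReal.ofReal (rexp (-(d:ℝ) / (2 * k)) + rexp (-(d:ℝ) / (2 * k))
          + rexp (-(d:ℝ) / (2 * k))) := by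
        rw [← ENNReal.ofReal_add (by positivity) (by positivity),
          ← ENNReal.ofReal_add (by positivity) (by positivity)]
    _ ≤ ENNReal.ofReal (2 * k * (d : ℝ) ^ (-(Real.log d) / 2)) := by
        apply ENNReal.ofReal_le_ofReal
        set L : ℝ := Real.log d with hLdef
        have hL0 : 0 < L := Real.log_pos hd1
        have hsd : 0 < Real.sqrt (d:ℝ) := Real.sqrt_pos.mpr hd0
        have hsdsq : Real.sqrt (d:ℝ) * Real.sqrt (d:ℝ) = d := Real.mul_self_sqrt hd0.le
        have hlog2 : L / 2 ≤ Real.sqrt (d:ℝ) - 1 := by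
          have h1 := Real.log_le_sub_one_of_pos hsd
          rw [Real.log_sqrt hd0.le] at h1
          exact h1
        have hkL : (k:ℝ) * L ^ 2 ≤ d := by nlinarith
        have hrpow : (d : ℝ) ^ (-(Real.log d) / 2) = rexp (-(L ^ 2) / 2) := by
          rw [Real.rpow_def_of_pos hd0, ← hLdef]
          congr 1
          ring
        rw [hrpow]
        have hexp : rexp (-(d:ℝ) / (2 * k)) ≤ rexp (-(L ^ 2) / 2) := by
          apply Real.exp_le_exp.mpr
          rw [neg_div, neg_div, neg_le_neg_iff, div_le_div_iff₀ (by positivity) (by positivity)]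
          nlinarith
        have h3 : (3:ℝ) ≤ 2 * k := by
          have : (2:ℝ) ≤ k := by exact_mod_cast hk2
          linarith
        nlinarith [Real.exp_pos (-(L ^ 2) / 2), Real.exp_pos (-(d:ℝ) / (2 * k))]
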